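/- Let C_n (n ≥ 3) be a fuzzy cycle u_1,...,u_n,u_1 with μ(u_n,u_1) minimal among all edge memberships. Then every edge of C_n is strong if and only if there exists j ∈ {1,...,n−1} with μ(u_j, u_{j+1}) = μ(u_n, u_1) (i.e., the minimum edge membership is attained at least twice). -/

import Mathlib

noncomputable section
open scoped Classical
open Finset

/-- A fuzzy graph on a vertex set `V`. -/
structure FuzzyGraph (V : Type*) where
  σ : V → ℝ
  μ : V → V → ℝ
  σ_nonneg : ∀ v, 0 ≤ σ v
  σ_le_one : ∀ v, σ v ≤ 1
  μ_nonneg : ∀ u v, 0 ≤ μ u v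
  μ_symm : ∀ u v, μ u v = μ v u
  μ_le : ∀ u v, μ u v ≤ min (σ u) (σ v)
  μ_irrefl : ∀ v, μ v v = 0

namespace FuzzyGraph

variable {V : Type*} (G : FuzzyGraph V)

/-- The strength of a walk (given as its list of vertices): the minimum
membership value of its edges (1 for walks without edges). -/
def walkStrength (l : List V) : ℝ :=
  ((l.zip l.tail).map fun p => G.μ p.1 p.2).foldr min 1

/-- `l` is a `u`–`v` walk: it starts at `u`, ends at `v`, and consecutive
vertices are joined by edges of positive membership. -/
def IsWalk (u v : V) (l : List V) : Prop :=
  l.head? = some u ∧ l.getLast? = some v ∧ l.Chain' (fun a b => 0 < G.μ a b)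

/-- `CONN_G(u,v)`: the maximum strength over all `u`–`v` paths. -/
def conn (u v : V) : ℝ :=
  sSup {s | ∃ l : List V, G.IsWalk u v l ∧ 2 ≤ l.length ∧ s = G.walkStrength l}

/-- The edge `(u,v)` is strong. -/
def StrongEdge (u v : V) : Prop :=
  0 < G.μ u v ∧ G.μ u v = G.conn u v

/-- `μ_s(u)`: the minimum membership value among strong edges at `u`
(`0` if `u` has no strong neighbor, via `Real.sInf_empty`). -/
def mus (u : V) : ℝ :=
  sInf {x | ∃ v, G.StrongEdge u v ∧ x = G.μ u v}

/-- The strong neighborhood degree `d_SN(v)`. -/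
def dSN [Fintype V] (v : V) : ℝ :=
  ∑ u ∈ Finset.univ.filter (fun u => G.StrongEdge v u), G.σ u

/-- `D` is a strong dominating set. -/
def IsStrongDomSet (D : Finset V) : Prop :=
  ∀ v, v ∉ D → ∃ u ∈ D, G.StrongEdge v u

/-- The weight of a strong dominating set. -/
def domWeight (D : Finset V) : ℝ := ∑ u ∈ D, G.mus u

/-- The strong domination number `γ_s(G)`. -/
def gammaS [Fintype V] : ℝ :=
  sInf {w | ∃ D : Finset V, G.IsStrongDomSet D ∧ w = G.domWeight D}

/-- `f` is a strong-neighbors Roman dominating function (SNRDF). -/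
def IsSNRDF (f : V → ℕ) : Prop :=
  (∀ v, f v ≤ 2) ∧ ∀ v, f v = 0 → ∃ u, G.StrongEdge v u ∧ f u = 2

/-- The weight of an SNRDF. -/
def snrdfWeight [Fintype V] (f : V → ℕ) : ℝ := ∑ v, (f v : ℝ) * G.mus v

/-- The strong-neighbors Roman domination number `γ_snR(G)`. -/
def gammaSnR [Fintype V] : ℝ :=
  sInf {w | ∃ f : V → ℕ, G.IsSNRDF f ∧ w = G.snrdfWeight f}

/-- The fuzzy subgraph induced by the vertices satisfying `p`. -/
def induce (p : V → Prop) : FuzzyGraph {v // p v} where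
  σ v := G.σ v
  μ u v := G.μ u v
  σ_nonneg v := G.σ_nonneg v
  σ_le_one v := G.σ_le_one v
  μ_nonneg u v := G.μ_nonneg u v
  μ_symm u v := G.μ_symm u v
  μ_le u v := G.μ_le u v
  μ_irrefl v := G.μ_irrefl v

/-- The minimum membership value among the strong edges of `G`. -/
def muMin : ℝ := sInf {x | ∃ u v, G.StrongEdge u v ∧ x = G.μ u v}

/-- The complement of a fuzzy graph. -/
def compl : FuzzyGraph V where
  σ := G.σ
  μ u v := if u = v then 0 else min (G.σ u) (G.σ v) - G.μ u v
  σ_nonneg := G.σ_nonneg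
  σ_le_one := G.σ_le_one
  μ_nonneg u v := by
    by_cases h : u = v
    · simp [h]
    · simp only [if_neg h, sub_nonneg]
      exact G.μ_le u v
  μ_symm u v := by
    by_cases h : u = v
    · simp [h]
    · have h' : ¬ v = u := fun hh => h hh.symm
      simp only [if_neg h, if_neg h', min_comm (G.σ u), G.μ_symm u v]
  μ_le u v := by
    by_cases h : u = v
    · subst h
      simp only [if_pos rfl, le_min_iff]
      exact ⟨G.σ_nonneg u, G.σ_nonneg u⟩
    · simp only [if_neg h]
      have := G.μ_nonneg u v
      linarith
  μ_irrefl v := by simp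

end FuzzyGraph



section Aux

lemma foldr_min_le_one (L : List ℝ) : L.foldr min 1 ≤ 1 := by
  induction L with
  | nil => simp
  | cons a t ih => exact le_trans (min_le_right _ _) ih

lemma foldr_min_le_mem {L : List ℝ} {x : ℝ} (hx : x ∈ L) : L.foldr min 1 ≤ x := by
  induction L with
  | nil => simp at hx
  | cons a t ih =>
    rcases List.mem_cons.mp hx with rfl | hx
    · exact min_le_left _ _
    · exact le_trans (min_le_right _ _) (ih hx)

lemma lt_foldr_min {m : ℝ} (hm : m < 1) (L : List ℝ) (h : ∀ x ∈ L, m < x) :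
    m < L.foldr min 1 := by
  induction L with
  | nil => simpa using hm
  | cons a t ih =>
    exact lt_min (h a (List.mem_cons_self)) (ih fun x hx => h x (List.mem_cons_of_mem _ hx))

lemma exists_cross {α : Type*} (f : α → Bool) :
    ∀ (l : List α) (u v : α), l.head? = some u → l.getLast? = some v → f u ≠ f v →
      ∃ p ∈ l.zip l.tail, f p.1 ≠ f p.2
  | [], u, v, h, _, _ => by simp at h
  | [a], u, v, hu, hv, hf => by
    simp at hu hv; subst hu; subst hv; exact absurd rfl hf
  | a :: b :: t, u, v, hu, hv, hf => by
    simp only [List.head?_cons, Option.some.injEq] at hu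
    subst hu
    by_cases hab : f a = f b
    · obtain ⟨p, hp, hpf⟩ := exists_cross f (b :: t) b v rfl
        (by rwa [List.getLast?_cons_cons] at hv) (hab ▸ hf)
      exact ⟨p, List.mem_cons_of_mem _ hp, hpf⟩
    · exact ⟨(a, b), List.mem_cons_self, hab⟩

lemma chain'_zip {α : Type*} {R : α → α → Prop} :
    ∀ {l : List α}, l.Chain' R → ∀ p ∈ l.zip l.tail, R p.1 p.2
  | [], _, p, hp => by simp at hp
  | [a], _, p, hp => by simp at hp
  | a :: b :: t, h, p, hp => by
    simp only [List.Chain', List.isChain_cons_cons] at h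
    rcases List.mem_cons.mp hp with rfl | hp
    · exact h.1
    · exact chain'_zip h.2 p hp

lemma zip_tail_map_range {α : Type*} :
    ∀ (N : ℕ) (f : ℕ → α), ((List.range (N+1)).map f).zip (((List.range (N+1)).map f).tail)
      = (List.range N).map (fun t => (f t, f (t+1)))
  | 0, f => by rfl
  | (N+1), f => by
    have h1 : (List.range (N+2)).map f = f 0 :: (List.range (N+1)).map (fun t => f (t+1)) := by
      rw [List.range_succ_eq_map, List.map_cons, List.map_map]; rfl
    have h2 : (List.range (N+1)).map (fun t => f (t+1))
        = f 1 :: (List.range N).map (fun t => f (t+2)) := by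
      rw [List.range_succ_eq_map, List.map_cons, List.map_map]; rfl
    have ih := zip_tail_map_range N (fun t => f (t+1))
    have h3 : ((List.range (N+1)).map (fun t => f (t+1))).tail
        = (List.range N).map (fun t => f (t+2)) := by rw [h2]; rfl
    rw [h1]
    simp only [List.tail_cons]
    rw [h2, List.zip_cons_cons, ← h2, ← h3, ih]
    rw [List.range_succ_eq_map, List.map_cons, List.map_map]
    rfl

end Aux

/-- a fuzzy cycle is strong iff its minimum edge membership is
attained at least twice. -/
theorem fuzzy_cycle_strong_iff {n : ℕ} [NeZero n] (hn : 3 ≤ n)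
    (G : FuzzyGraph (Fin n))
    (hadj : ∀ i j : Fin n, 0 < G.μ i j ↔ (j = i + 1 ∨ i = j + 1))
    (hmin : ∀ i : Fin n, G.μ (-1) 0 ≤ G.μ i (i + 1)) :
    (∀ i : Fin n, G.StrongEdge i (i + 1)) ↔
      ∃ i : Fin n, i ≠ -1 ∧ G.μ i (i + 1) = G.μ (-1) 0 := by
  obtain ⟨m, rfl⟩ : ∃ m, n = m + 1 := ⟨n - 1, by omega⟩
  letI : CommRing (Fin (m+1)) := Fin.instCommRing (m+1)
  have hm2 : 2 ≤ m := by omega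
  have hμ1 : ∀ u v : Fin (m+1), G.μ u v ≤ 1 := fun u v =>
    le_trans (G.μ_le u v) (le_trans (min_le_left _ _) (G.σ_le_one u))
  have hpos : ∀ i : Fin (m+1), 0 < G.μ i (i+1) := fun i => (hadj i (i+1)).2 (Or.inl rfl)
  have h10 : (-1 : Fin (m+1)) + 1 = 0 := neg_add_cancel 1
  have hvneg : (-1 : Fin (m+1)).val = m := by simp
  have hvlt : ∀ x : Fin (m+1), x ≠ -1 → x.val < m := by
    intro x h
    rcases lt_or_eq_of_le (Fin.is_le x) with h3 | h3
    · exact h3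
    · exact absurd (Fin.ext (by simp [h3])) h
  have hbdd : ∀ u v : Fin (m+1), BddAbove
      {s | ∃ l, G.IsWalk u v l ∧ 2 ≤ l.length ∧ s = G.walkStrength l} := by
    intro u v
    refine ⟨1, ?_⟩
    rintro s ⟨l, _, _, rfl⟩
    exact foldr_min_le_one _
  have hmem : ∀ i : Fin (m+1), G.μ i (i+1) ∈
      {s | ∃ l, G.IsWalk i (i+1) l ∧ 2 ≤ l.length ∧ s = G.walkStrength l} := by
    intro i
    refine ⟨[i, i+1], ⟨rfl, rfl, ?_⟩, by simp, ?_⟩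
    · simp [List.Chain', hpos i]
    · simp only [FuzzyGraph.walkStrength, List.zip, List.tail_cons, List.zipWith_cons_cons,
        List.zipWith_nil_right, List.map_cons, List.map_nil, List.foldr_cons, List.foldr_nil]
      exact (min_eq_left (hμ1 i (i+1))).symm
  have hcross : ∀ i k : Fin (m+1), k ≠ i →
      ∀ l, G.IsWalk i (i+1) l →
        G.walkStrength l ≤ G.μ i (i+1) ∨ G.walkStrength l ≤ G.μ k (k+1) := by
    intro i k hk l hw
    obtain ⟨hh, hl, hc⟩ := hw
    set f : Fin (m+1) → Bool := fun v => decide ((v - (i+1)).val ≤ (k - (i+1)).val) with hf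
    have hkne : k - (i+1) ≠ -1 := fun h => hk (by linear_combination h)
    have hkval : (k - (i+1)).val < m := hvlt _ hkne
    have hfi : f i ≠ f (i+1) := by
      have h1 : (i - (i+1)) = (-1 : Fin (m+1)) := by ring
      have h2 : ((i+1) - (i+1)) = (0 : Fin (m+1)) := by ring
      simp only [hf, h1, h2, hvneg, Fin.val_zero]
      simp [Nat.not_le.mpr hkval]
    obtain ⟨p, hp, hpf⟩ := exists_cross f l i (i+1) hh hl hfi
    have hppos : 0 < G.μ p.1 p.2 := chain'_zip hc p hp
    have hstr : G.walkStrength l ≤ G.μ p.1 p.2 :=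
      foldr_min_le_mem (List.mem_map_of_mem hp)
    have hid : ∀ c : Fin (m+1), f c ≠ f (c+1) → c = i ∨ c = k := by
      intro c hcne
      by_contra hcon
      push_neg at hcon
      apply hcne
      have hx : c - (i+1) ≠ -1 := fun h => hcon.1 (by linear_combination h)
      have hxv : (c - (i+1)).val < m := hvlt _ hx
      have hadd : (c+1) - (i+1) = (c - (i+1)) + 1 := by ring
      have hv1 : ((c - (i+1)) + 1).val = (c - (i+1)).val + 1 := by
        rw [Fin.val_add_one, if_neg]
        intro hh2; rw [hh2] at hxv; simp at hxv
      have hne2 : (c - (i+1)).val ≠ (k - (i+1)).val := by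
        intro h
        exact hcon.2 (by linear_combination (Fin.ext h : c - (i+1) = k - (i+1)))
      simp only [hf, hadd, hv1]
      exact decide_eq_decide.mpr (by omega)
    rcases (hadj p.1 p.2).1 hppos with h1 | h2
    · rcases hid p.1 (h1 ▸ hpf) with hcc | hcc
      · left; rw [h1, hcc] at hstr; exact hstr
      · right; rw [h1, hcc] at hstr; exact hstr
    · have hpf2 : f p.2 ≠ f (p.2+1) := by rw [← h2]; exact hpf.symm
      have hstr2 : G.walkStrength l ≤ G.μ p.2 (p.2+1) := by
        rw [G.μ_symm p.2 (p.2+1), ← h2]; exact hstr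
      rcases hid p.2 hpf2 with hcc | hcc
      · left; rw [hcc] at hstr2; exact hstr2
      · right; rw [hcc] at hstr2; exact hstr2
  have hconn_le : ∀ i k : Fin (m+1), k ≠ i → G.μ k (k+1) ≤ G.μ i (i+1) →
      G.conn i (i+1) ≤ G.μ i (i+1) := by
    intro i k hk hle
    rw [FuzzyGraph.conn]
    apply csSup_le ⟨_, hmem i⟩
    rintro s ⟨l, hw, hlen, rfl⟩
    rcases hcross i k hk l hw with h | h
    · exact h
    · exact le_trans h hle
  constructor
  · intro hstrong
    by_contra hne
    push_neg at hne
    have hlt : ∀ i : Fin (m+1), i ≠ -1 → G.μ (-1) 0 < G.μ i (i+1) :=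
      fun i hi => lt_of_le_of_ne (hmin i) (fun h => hne i hi h.symm)
    have hcast : ∀ t : ℕ, ((t+1 : ℕ) : Fin (m+1)) = (t : Fin (m+1)) + 1 := fun t => by
      push_cast; ring
    set f : ℕ → Fin (m+1) := fun t => -1 - (t : Fin (m+1)) with hfdef
    set l : List (Fin (m+1)) := (List.range (m+1)).map f with hldef
    have hfsucc : ∀ t : ℕ, f t = f (t+1) + 1 := fun t => by
      simp only [hfdef, hcast]; ring
    have hfne : ∀ t : ℕ, t + 1 < m + 1 → f (t+1) ≠ -1 := by
      intro t ht h
      have h2 : ((t+1 : ℕ) : Fin (m+1)) = 0 := by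
        have h3 : ((t+1 : ℕ) : Fin (m+1)) = -1 - (-1 : Fin (m+1)) := by
          simp only [hfdef] at h; linear_combination -h
        simpa using h3
      have h4 := congrArg Fin.val h2
      rw [Fin.val_cast_of_lt ht] at h4
      simp at h4
    have hmcast : ((m : ℕ) : Fin (m+1)) = -1 := by
      have h2 : ((m+1 : ℕ) : Fin (m+1)) = 0 := by simp
      push_cast at h2
      linear_combination h2
    have hhead : l.head? = some (-1) := by
      rw [hldef, List.range_succ_eq_map, List.map_cons]
      simp [hfdef]
    have hlast : l.getLast? = some 0 := by
      rw [hldef, List.getLast?_map]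
      have h3 : (List.range (m+1)).getLast? = some m := by
        rw [List.range_succ]; exact List.getLast?_concat
      rw [h3]
      simp only [Option.map_some, hfdef, hmcast]
      norm_num
    have hchain : l.Chain' (fun a b => 0 < G.μ a b) := by
      rw [hldef]; simp only [List.Chain', List.isChain_map]
      exact (List.isChain_range_succ _ m).mpr fun t ht =>
        (hadj (f t) (f (t+1))).2 (Or.inr (hfsucc t))
    have hzip := zip_tail_map_range m f
    have hstrgt : G.μ (-1) 0 < G.walkStrength l := by
      rw [FuzzyGraph.walkStrength, hldef]
      rw [hzip, List.map_map]
      apply lt_foldr_min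
      · refine lt_of_lt_of_le (hlt 0 ?_) (hμ1 _ _)
        intro h
        have h5 := congrArg Fin.val h
        rw [hvneg] at h5
        simp at h5
        omega
      · intro x hx
        simp only [List.mem_map, List.mem_range, Function.comp] at hx
        obtain ⟨t, ht, rfl⟩ := hx
        rw [G.μ_symm (f t) (f (t+1)), hfsucc t]
        exact hlt (f (t+1)) (hfne t (by omega))
    have hwalk : G.IsWalk (-1) 0 l := ⟨hhead, hlast, hchain⟩
    have hlen : 2 ≤ l.length := by
      rw [hldef, List.length_map, List.length_range]; omega
    have hconn_ge : G.walkStrength l ≤ G.conn (-1) 0 := by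
      rw [FuzzyGraph.conn]
      exact le_csSup (hbdd _ _) ⟨l, hwalk, hlen, rfl⟩
    have hs := (hstrong (-1)).2
    rw [h10] at hs
    linarith
  · rintro ⟨j, hj, hjeq⟩ i
    refine ⟨hpos i, le_antisymm ?_ ?_⟩
    · rw [FuzzyGraph.conn]
      exact le_csSup (hbdd i (i+1)) (hmem i)
    · by_cases hi : i = -1
      · subst hi
        refine hconn_le _ j hj ?_
        rw [h10, ← hjeq]
      · refine hconn_le i (-1) (Ne.symm hi) ?_
        rw [h10]
        exact hmin i
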